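/- Let M ⊆ ℤ^{n₁} × ℝ^{n₂} be a monoid, A ∈ ℝ^{m×n₁}, G ∈ ℝ^{m×n₂}, c ∈ ℝ^{n₁}, d ∈ ℝ^{n₂}, and let I(M) and I'(M) be two generating sets of M. Let D ⊆ ℝ^m contain Ω = {Au + Gv : (u,v) ∈ M} and let f : D → ℝ be subadditive with f(0) = 0. Then f(Au + Gv) ≤ c^Tu + d^Tv holds for all (u,v) ∈ I(M) if and only if f(Au + Gv) ≤ c^Tu + d^Tv holds for all (u,v) ∈ I'(M). -/

import Mathlib

open Matrix

/-- `I` is a generating set of the monoid `M`: `I ⊆ M` and every element of `M`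
is a finite nonnegative-integer combination of elements of `I`. -/
def IsGenSet {V : Type*} [AddCommMonoid V] [Module ℝ V] (M I : Set V) : Prop :=
  I ⊆ M ∧ ∀ w ∈ M, ∃ (p : ℕ) (h : Fin p → V) (lam : Fin p → ℕ),
    (∀ i, h i ∈ I) ∧ w = ∑ i, (lam i : ℝ) • h i

theorem aux_key {n₁ n₂ m : ℕ}
    (M : Set ((Fin n₁ → ℝ) × (Fin n₂ → ℝ)))
    (hMzero : (0 : (Fin n₁ → ℝ) × (Fin n₂ → ℝ)) ∈ M)
    (hMadd : ∀ p ∈ M, ∀ q ∈ M, p + q ∈ M)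
    (A : Matrix (Fin m) (Fin n₁) ℝ) (G : Matrix (Fin m) (Fin n₂) ℝ)
    (c : Fin n₁ → ℝ) (d : Fin n₂ → ℝ)
    (I : Set ((Fin n₁ → ℝ) × (Fin n₂ → ℝ)))
    (hI : IsGenSet M I)
    (D : Set (Fin m → ℝ))
    (hD : {ω | ∃ p ∈ M, A.mulVec p.1 + G.mulVec p.2 = ω} ⊆ D)
    (f : (Fin m → ℝ) → ℝ)
    (hsub : ∀ u ∈ D, ∀ v ∈ D, u + v ∈ D → f (u + v) ≤ f u + f v)
    (hf0 : f 0 = 0)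
    (hb : ∀ p ∈ I, f (A.mulVec p.1 + G.mulVec p.2) ≤ c ⬝ᵥ p.1 + d ⬝ᵥ p.2) :
    ∀ w ∈ M, f (A.mulVec w.1 + G.mulVec w.2) ≤ c ⬝ᵥ w.1 + d ⬝ᵥ w.2 := by
  -- list lemma
  have listLem : ∀ L : List ((Fin n₁ → ℝ) × (Fin n₂ → ℝ)),
      (∀ x ∈ L, x ∈ I) →
      L.sum ∈ M ∧ f (A.mulVec L.sum.1 + G.mulVec L.sum.2) ≤ c ⬝ᵥ L.sum.1 + d ⬝ᵥ L.sum.2 := by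
    intro L
    induction L with
    | nil =>
      intro _
      refine ⟨hMzero, ?_⟩
      simp [hf0]
    | cons x L ih =>
      intro hmem
      have hx : x ∈ I := hmem x List.mem_cons_self
      have hL := ih (fun y hy => hmem y (List.mem_cons_of_mem _ hy))
      have hxM : x ∈ M := hI.1 hx
      have hsM : x + L.sum ∈ M := hMadd x hxM L.sum hL.1
      constructor
      · simpa using hsM
      · have e1 : A.mulVec (x + L.sum).1 + G.mulVec (x + L.sum).2 =
            (A.mulVec x.1 + G.mulVec x.2) + (A.mulVec L.sum.1 + G.mulVec L.sum.2) := by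
          simp [Prod.fst_add, Prod.snd_add, mulVec_add]
          abel
      -- memberships in D
        have d1 : A.mulVec x.1 + G.mulVec x.2 ∈ D := hD ⟨x, hxM, rfl⟩
        have d2 : A.mulVec L.sum.1 + G.mulVec L.sum.2 ∈ D := hD ⟨L.sum, hL.1, rfl⟩
        have d3 : (A.mulVec x.1 + G.mulVec x.2) + (A.mulVec L.sum.1 + G.mulVec L.sum.2) ∈ D := by
          apply hD
          exact ⟨x + L.sum, hsM, e1⟩
        have := hsub _ d1 _ d2 d3
        calc f (A.mulVec (x + L.sum).1 + G.mulVec (x + L.sum).2)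
            = f ((A.mulVec x.1 + G.mulVec x.2) + (A.mulVec L.sum.1 + G.mulVec L.sum.2)) := by
              rw [e1]
          _ ≤ f (A.mulVec x.1 + G.mulVec x.2) + f (A.mulVec L.sum.1 + G.mulVec L.sum.2) := this
          _ ≤ (c ⬝ᵥ x.1 + d ⬝ᵥ x.2) + (c ⬝ᵥ L.sum.1 + d ⬝ᵥ L.sum.2) := by
              exact add_le_add (hb x hx) hL.2
          _ = c ⬝ᵥ (x + L.sum).1 + d ⬝ᵥ (x + L.sum).2 := by
              simp [Prod.fst_add, Prod.snd_add, dotProduct_add]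
              ring
  intro w hw
  obtain ⟨p, h, lam, hhI, hwsum⟩ := hI.2 w hw
  set L : List ((Fin n₁ → ℝ) × (Fin n₂ → ℝ)) :=
    (List.ofFn (fun i => List.replicate (lam i) (h i))).flatten with hLdef
  have hLmem : ∀ x ∈ L, x ∈ I := by
    intro x hx
    simp only [hLdef, List.mem_flatten, List.mem_ofFn] at hx
    obtain ⟨l, ⟨i, hil⟩, hxl⟩ := hx
    rw [← hil] at hxl
    rw [List.eq_of_mem_replicate hxl]
    exact hhI i
  have hrep : ∀ i : Fin p, (List.replicate (lam i) (h i)).sum = (lam i : ℝ) • h i := by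
    intro i
    rw [List.sum_replicate]
    exact (Nat.cast_smul_eq_nsmul ℝ (lam i) (h i)).symm
  have hLsum : L.sum = w := by
    rw [hwsum, hLdef, List.sum_flatten, List.map_ofFn]
    rw [List.sum_ofFn]
    exact Finset.sum_congr rfl (fun i _ => hrep i)
  have := (listLem L hLmem).2
  rwa [hLsum] at this


/-- The dual constraints do not depend on the choice of generating set of `M`. -/
theorem genSet_constraints_indep {n₁ n₂ m : ℕ}
    (M : Set ((Fin n₁ → ℝ) × (Fin n₂ → ℝ)))
    (hMzero : (0 : (Fin n₁ → ℝ) × (Fin n₂ → ℝ)) ∈ M)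
    (hMadd : ∀ p ∈ M, ∀ q ∈ M, p + q ∈ M)
    (hMint : ∀ p ∈ M, ∀ i, ∃ k : ℤ, p.1 i = (k : ℝ))
    (A : Matrix (Fin m) (Fin n₁) ℝ) (G : Matrix (Fin m) (Fin n₂) ℝ)
    (c : Fin n₁ → ℝ) (d : Fin n₂ → ℝ)
    (I I' : Set ((Fin n₁ → ℝ) × (Fin n₂ → ℝ)))
    (hI : IsGenSet M I) (hI' : IsGenSet M I')
    (D : Set (Fin m → ℝ))
    (hD : {ω | ∃ p ∈ M, A.mulVec p.1 + G.mulVec p.2 = ω} ⊆ D)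
    (f : (Fin m → ℝ) → ℝ)
    (hsub : ∀ u ∈ D, ∀ v ∈ D, u + v ∈ D → f (u + v) ≤ f u + f v)
    (hf0 : f 0 = 0) :
    (∀ p ∈ I, f (A.mulVec p.1 + G.mulVec p.2) ≤ c ⬝ᵥ p.1 + d ⬝ᵥ p.2) ↔
      (∀ p ∈ I', f (A.mulVec p.1 + G.mulVec p.2) ≤ c ⬝ᵥ p.1 + d ⬝ᵥ p.2) := by
  constructor
  · intro hb p hp
    exact aux_key M hMzero hMadd A G c d I hI D hD f hsub hf0 hb p (hI'.1 hp)
  · intro hb p hp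
    exact aux_key M hMzero hMadd A G c d I' hI' D hD f hsub hf0 hb p (hI.1 hp)
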